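/- With ℬ and σ as above, define ε : 𝒢*_{n−1}(F) → ℬ by ε(h_v) = b_v − Σ_{e ∋ v} a'_{e,v}, ε(h_e) = h_e, ε(h_e*) = h_e*, extended multiplicatively. Then ε is a chain map of dg-algebras and σ ∘ ε = id on 𝒢*_{n−1}(F). -/

import Mathlib

/-- With `ℬ` and `σ` as in Statement 6, the algebra map
`ε : 𝒢*_{n-1}(F) → ℬ` determined by `ε(h_v) = b_v − ∑_{e ∋ v} a'_{e,v}`, `ε(h_e) = h_e`,
`ε(h_e*) = h_e*` is a chain map of dg-algebras, and `σ ∘ ε = id` on `𝒢*_{n-1}(F)`. -/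
theorem epsilon_is_chain_map_and_sigma_eps_id
    {k BB AG : Type*} [Field k] [Ring BB] [Algebra k BB] [Ring AG] [Algebra k AG]
    (ℬ : ℤ → Submodule k BB) [GradedAlgebra ℬ]
    (𝒢 : ℤ → Submodule k AG) [GradedAlgebra 𝒢] (n : ℤ)
    (V E : Type*) [Fintype E] [DecidableEq V]
    (s t : E → V)
    -- the dg-algebra ℬ
    (idemB : V → BB) (b : V → BB) (a1' a2' d1 d2 hB hsB : E → BB)
    (hidemBdeg : ∀ v, idemB v ∈ ℬ 0)
    (hbdeg : ∀ v, b v ∈ ℬ (2 - n))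
    (ha1'deg : ∀ e, a1' e ∈ ℬ (2 - n)) (ha2'deg : ∀ e, a2' e ∈ ℬ (2 - n))
    (hd1deg : ∀ e, d1 e ∈ ℬ (3 - n)) (hd2deg : ∀ e, d2 e ∈ ℬ (3 - n))
    (hhBdeg : ∀ e, hB e ∈ ℬ 0) (hhsBdeg : ∀ e, hsB e ∈ ℬ (3 - n))
    (hgenB : Algebra.adjoin k
        (Set.range idemB ∪ Set.range b ∪ Set.range a1' ∪ Set.range a2' ∪
          Set.range d1 ∪ Set.range d2 ∪ Set.range hB ∪ Set.range hsB) = ⊤)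
    (dB : BB →ₗ[k] BB)
    (hdBDeg : ∀ i : ℤ, ∀ x ∈ ℬ i, dB x ∈ ℬ (i + 1))
    (hLeibB : ∀ (i : ℤ) (x y : BB), x ∈ ℬ i →
        dB (x * y) = dB x * y + (Int.negOnePow i : ℤ) • (x * dB y))
    (hdBidem : ∀ v, dB (idemB v) = 0)
    (hdBb : ∀ v, dB (b v) =
        (∑ e ∈ Finset.univ.filter (fun e => s e = v), d1 e) +
        (∑ e ∈ Finset.univ.filter (fun e => t e = v), d2 e))
    (hdBa1' : ∀ e, dB (a1' e) = d1 e - hB e * hsB e)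
    (hdBa2' : ∀ e, dB (a2' e) = d2 e + hsB e * hB e)
    (hdBd1 : ∀ e, dB (d1 e) = 0) (hdBd2 : ∀ e, dB (d2 e) = 0)
    (hdBh : ∀ e, dB (hB e) = 0) (hdBhs : ∀ e, dB (hsB e) = 0)
    -- the (n-1)-dimensional Ginzburg algebra 𝒢*_{n-1}(F)
    (idem : V → AG) (gT : E → AG) (gsT : E → AG) (hT : V → AG)
    (hidemdeg : ∀ v, idem v ∈ 𝒢 0)
    (hgTdeg : ∀ e, gT e ∈ 𝒢 0) (hgsTdeg : ∀ e, gsT e ∈ 𝒢 (3 - n))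
    (hhTdeg : ∀ v, hT v ∈ 𝒢 (2 - n))
    (hgenG : Algebra.adjoin k
        (Set.range idem ∪ Set.range gT ∪ Set.range gsT ∪ Set.range hT) = ⊤)
    (dG : AG →ₗ[k] AG)
    (hdGDeg : ∀ i : ℤ, ∀ x ∈ 𝒢 i, dG x ∈ 𝒢 (i + 1))
    (hLeibG : ∀ (i : ℤ) (x y : AG), x ∈ 𝒢 i →
        dG (x * y) = dG x * y + (Int.negOnePow i : ℤ) • (x * dG y))
    (hdGidem : ∀ v, dG (idem v) = 0)
    (hdGg : ∀ e, dG (gT e) = 0) (hdGgs : ∀ e, dG (gsT e) = 0)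
    (hdGh : ∀ v, dG (hT v) =
        (∑ e ∈ Finset.univ.filter (fun e => s e = v), gT e * gsT e) -
        (∑ e ∈ Finset.univ.filter (fun e => t e = v), gsT e * gT e))
    -- the map σ : ℬ → 𝒢*_{n-1}(F), determined by its values on generators
    (σ : BB →ₐ[k] AG)
    (hσidem : ∀ v, σ (idemB v) = idem v)
    (hσb : ∀ v, σ (b v) = hT v)
    (hσa1' : ∀ e, σ (a1' e) = 0) (hσa2' : ∀ e, σ (a2' e) = 0)
    (hσd1 : ∀ e, σ (d1 e) = gT e * gsT e)
    (hσd2 : ∀ e, σ (d2 e) = -(gsT e * gT e))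
    (hσh : ∀ e, σ (hB e) = gT e) (hσhs : ∀ e, σ (hsB e) = gsT e)
    -- the map ε : 𝒢*_{n-1}(F) → ℬ, determined by its values on generators
    (ε : AG →ₐ[k] BB)
    (hεidem : ∀ v, ε (idem v) = idemB v)
    (hεh : ∀ v, ε (hT v) = b v -
        ((∑ e ∈ Finset.univ.filter (fun e => s e = v), a1' e) +
         (∑ e ∈ Finset.univ.filter (fun e => t e = v), a2' e)))
    (hεg : ∀ e, ε (gT e) = hB e) (hεgs : ∀ e, ε (gsT e) = hsB e)
    :
    (∀ i : ℤ, ∀ x ∈ 𝒢 i, ε x ∈ ℬ i) ∧ (∀ x : AG, ε (dG x) = dB (ε x)) ∧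
      (∀ x : AG, σ (ε x) = x) := by
  classical
  -- the differentials kill 1
  have hdG1 : dG (1 : AG) = 0 := by
    have h := hLeibG 0 1 1 (SetLike.one_mem_graded 𝒢)
    simp only [one_mul, mul_one, Int.negOnePow_zero, Units.val_one, one_smul] at h
    exact (left_eq_add.mp h)
  have hdB1 : dB (1 : BB) = 0 := by
    have h := hLeibB 0 1 1 (SetLike.one_mem_graded ℬ)
    simp only [one_mul, mul_one, Int.negOnePow_zero, Units.val_one, one_smul] at h
    exact (left_eq_add.mp h)
  -- the submodule of elements where ε is a chain map
  set C : Submodule k AG := LinearMap.ker (ε.toLinearMap.comp dG - dB.comp ε.toLinearMap)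
    with hCdef
  have hmemC : ∀ x : AG, x ∈ C ↔ ε (dG x) = dB (ε x) := by
    intro x
    simp [hCdef, LinearMap.mem_ker, sub_eq_zero]
  -- the graded pieces of "good" elements
  set Q : ℤ → Submodule k AG := fun i => 𝒢 i ⊓ (ℬ i).comap ε.toLinearMap ⊓ C with hQdef
  have hmemQ : ∀ (i : ℤ) (x : AG),
      x ∈ Q i ↔ x ∈ 𝒢 i ∧ ε x ∈ ℬ i ∧ ε (dG x) = dB (ε x) := by
    intro i x
    simp only [hQdef, Submodule.mem_inf, Submodule.mem_comap, AlgHom.toLinearMap_apply,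
      hmemC, and_assoc]
  have hQle : ∀ i, Q i ≤ 𝒢 i := fun i => inf_le_left.trans inf_le_left
  have hQleC : ∀ i, Q i ≤ C := fun i => inf_le_right
  -- multiplicativity
  have hQmul : ∀ (i j : ℤ) (x y : AG), x ∈ Q i → y ∈ Q j → x * y ∈ Q (i + j) := by
    intro i j x y hx hy
    obtain ⟨hx1, hx2, hx3⟩ := (hmemQ _ _).mp hx
    obtain ⟨hy1, hy2, hy3⟩ := (hmemQ _ _).mp hy
    refine (hmemQ _ _).mpr ⟨SetLike.mul_mem_graded hx1 hy1, ?_, ?_⟩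
    · rw [map_mul]; exact SetLike.mul_mem_graded hx2 hy2
    · rw [hLeibG i x y hx1, map_add, map_mul, map_zsmul, map_mul, hx3, hy3, map_mul,
        hLeibB i (ε x) (ε y) hx2]
  -- the supremum of the Q i is closed under multiplication
  have hsupmul : ∀ x ∈ ⨆ i, Q i, ∀ y ∈ ⨆ i, Q i, x * y ∈ ⨆ i, Q i := by
    intro x hx
    refine Submodule.iSup_induction (motive := fun x => ∀ y ∈ ⨆ i, Q i, x * y ∈ ⨆ i, Q i) Q hx
      (fun i x hxi => ?_) (fun y hy => by simpa using zero_mem _) (fun a b ha hb y hy => by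
        show (a + b) * y ∈ ⨆ i, Q i
        rw [add_mul]; exact add_mem (ha y hy) (hb y hy))
    intro y hy
    refine Submodule.iSup_induction (motive := fun y => x * y ∈ ⨆ i, Q i) Q hy
      (fun j y hyj => Submodule.mem_iSup_of_mem (i + j) (hQmul i j x y hxi hyj))
      (by simpa using zero_mem _) (fun a b ha hb => by
        show x * (a + b) ∈ ⨆ i, Q i
        rw [mul_add]; exact add_mem ha hb)
  -- the generators of 𝒢 lie in the supremum of the Q i
  have hidemQ : ∀ v, idem v ∈ Q 0 := by
    intro v
    refine (hmemQ _ _).mpr ⟨hidemdeg v, ?_, ?_⟩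
    · rw [hεidem]; exact hidemBdeg v
    · rw [hdGidem, map_zero, hεidem, hdBidem]
  have hgTQ : ∀ e, gT e ∈ Q 0 := by
    intro e
    refine (hmemQ _ _).mpr ⟨hgTdeg e, ?_, ?_⟩
    · rw [hεg]; exact hhBdeg e
    · rw [hdGg, map_zero, hεg, hdBh]
  have hgsTQ : ∀ e, gsT e ∈ Q (3 - n) := by
    intro e
    refine (hmemQ _ _).mpr ⟨hgsTdeg e, ?_, ?_⟩
    · rw [hεgs]; exact hhsBdeg e
    · rw [hdGgs, map_zero, hεgs, hdBhs]
  have hhTQ : ∀ v, hT v ∈ Q (2 - n) := by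
    intro v
    refine (hmemQ _ _).mpr ⟨hhTdeg v, ?_, ?_⟩
    · rw [hεh]
      exact sub_mem (hbdeg v) (add_mem (Submodule.sum_mem _ fun e _ => ha1'deg e)
        (Submodule.sum_mem _ fun e _ => ha2'deg e))
    · simp only [hdGh, hεh, map_sub, map_add, map_sum, map_mul, hεg, hεgs, hdBb,
        hdBa1', hdBa2']
      rw [Finset.sum_sub_distrib, Finset.sum_add_distrib]
      abel
  have halg : ∀ r : k, algebraMap k AG r ∈ Q 0 := by
    intro r
    refine (hmemQ _ _).mpr ⟨SetLike.algebraMap_mem_graded 𝒢 r, ?_, ?_⟩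
    · rw [AlgHom.commutes]; exact SetLike.algebraMap_mem_graded ℬ r
    · rw [Algebra.algebraMap_eq_smul_one, map_smul, hdG1, smul_zero, map_zero,
        map_smul, map_one, map_smul, hdB1, smul_zero]
  -- every element lies in the supremum of the Q i
  have htop : ∀ x : AG, x ∈ ⨆ i, Q i := by
    intro x
    have hx : x ∈ Algebra.adjoin k
        (Set.range idem ∪ Set.range gT ∪ Set.range gsT ∪ Set.range hT) := by
      rw [hgenG]; trivial
    induction hx using Algebra.adjoin_induction with
    | mem y hy =>
        simp only [Set.mem_union, Set.mem_range] at hy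
        rcases hy with ((⟨v, rfl⟩ | ⟨e, rfl⟩) | ⟨e, rfl⟩) | ⟨v, rfl⟩
        · exact Submodule.mem_iSup_of_mem 0 (hidemQ v)
        · exact Submodule.mem_iSup_of_mem 0 (hgTQ e)
        · exact Submodule.mem_iSup_of_mem (3 - n) (hgsTQ e)
        · exact Submodule.mem_iSup_of_mem (2 - n) (hhTQ v)
    | algebraMap r => exact Submodule.mem_iSup_of_mem 0 (halg r)
    | add x y _ _ hx hy => exact add_mem hx hy
    | mul x y hx' hy' hx hy => exact hsupmul x hx y hy
  refine ⟨?_, ?_, ?_⟩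
  · -- ε preserves degrees
    intro i x hxi
    have hx := htop x
    have hle : (⨆ j, Q j) ≤ Q i ⊔ ⨆ j, ⨆ _ : j ≠ i, 𝒢 j := by
      refine iSup_le fun j => ?_
      by_cases hji : j = i
      · subst hji; exact le_sup_left
      · exact le_trans (le_trans (hQle j) (le_iSup₂ (f := fun j _ => 𝒢 j) j hji)) le_sup_right
    obtain ⟨a, ha, c, hc, hac⟩ := Submodule.mem_sup.mp (hle hx)
    have hcg : c ∈ 𝒢 i := by
      have : c = x - a := by rw [← hac]; abel
      rw [this]
      exact sub_mem hxi (hQle i ha)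
    have hind := (DirectSum.Decomposition.isInternal 𝒢).submodule_iSupIndep i
    have hc0 : c = 0 := Submodule.disjoint_def.mp hind c hcg hc
    have hxa : x = a := by rw [← hac, hc0, add_zero]
    rw [hxa]
    exact ((hmemQ i a).mp ha).2.1
  · -- ε is a chain map
    intro x
    exact (hmemC x).mp ((iSup_le hQleC : (⨆ i, Q i) ≤ C) (htop x))
  · -- σ ∘ ε = id
    intro x
    have hx : x ∈ Algebra.adjoin k
        (Set.range idem ∪ Set.range gT ∪ Set.range gsT ∪ Set.range hT) := by
      rw [hgenG]; trivial
    induction hx using Algebra.adjoin_induction with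
    | mem y hy =>
        simp only [Set.mem_union, Set.mem_range] at hy
        rcases hy with ((⟨v, rfl⟩ | ⟨e, rfl⟩) | ⟨e, rfl⟩) | ⟨v, rfl⟩
        · rw [hεidem, hσidem]
        · rw [hεg, hσh]
        · rw [hεgs, hσhs]
        · rw [hεh, map_sub, map_add, map_sum, map_sum, hσb]
          simp [hσa1', hσa2']
    | algebraMap r => simp
    | add x y _ _ hx hy => rw [map_add, map_add, hx, hy]
    | mul x y _ _ hx hy => rw [map_mul, map_mul, hx, hy]
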